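/- (Expander mixing lemma) Let G = (V, E) be a d-regular graph on n vertices with symmetric adjacency matrix A, and let λ be the second largest absolute value of an eigenvalue of A. For subsets S, T ⊆ V, let e(S,T) = Σ_{s ∈ S, t ∈ T} A[s,t]. Then |e(S,T) − d|S||T|/n| ≤ λ √(|S||T|(1 − |S|/n)(1 − |T|/n)). -/

import Mathlib

lemma mix_aux {V : Type} [Fintype V] [DecidableEq V] [Nonempty V] (d : ℕ) (A : Matrix V V ℝ)
    (hsymm : A.IsSymm) (hreg : ∀ x : V, ∑ y, A x y = d) (lam : ℝ)
    (hlam : IsGreatest {c : ℝ | ∃ (μ : ℝ) (v : V → ℝ), v ≠ 0 ∧ (∑ x, v x) = 0 ∧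
        A.mulVec v = μ • v ∧ c = |μ|} lam)
    (x y : V → ℝ) (hx : ∑ i, x i = 0) (hy : ∑ i, y i = 0) :
    |∑ i, x i * (A.mulVec y) i| ≤
      lam * (Real.sqrt (∑ i, x i ^ 2) * Real.sqrt (∑ i, y i ^ 2)) := by
  obtain ⟨μ0, v0, hv0, -, -, hlam0⟩ := hlam.1
  have hlamnn : 0 ≤ lam := hlam0 ▸ abs_nonneg μ0
  have hA : A.IsHermitian := by
    ext i j
    simpa [Matrix.conjTranspose_apply] using hsymm.apply i j
  set u := hA.eigenvectorBasis with hu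
  set μ := hA.eigenvalues with hμ
  have heig : ∀ i, A.mulVec (fun j => u i j) = fun k => μ i * u i k := by
    intro i
    have := hA.mulVec_eigenvectorBasis i
    funext k
    exact congrFun this k
  have hcard : (0 : ℝ) < Fintype.card V := by exact_mod_cast Fintype.card_pos
  -- column sums are d
  have hcol : ∀ j, ∑ i, A i j = d := fun j => by
    rw [Finset.sum_congr rfl fun i _ => hsymm.apply j i]; exact hreg j
  -- sum of mulVec
  have hsum_mulVec : ∀ v : V → ℝ, ∑ i, (A.mulVec v) i = d * ∑ j, v j := by
    intro v
    simp only [Matrix.mulVec, dotProduct]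
    rw [Finset.sum_comm, Finset.mul_sum]
    refine Finset.sum_congr rfl fun j _ => ?_
    rw [← Finset.sum_mul, hcol j]
  set x' : EuclideanSpace ℝ V := WithLp.toLp 2 x with hx'
  set y' : EuclideanSpace ℝ V := WithLp.toLp 2 y with hy'
  set a : V → ℝ := fun i => inner (𝕜 := ℝ) (u i) x' with ha
  set b : V → ℝ := fun i => inner (𝕜 := ℝ) (u i) y' with hb
  have hinner : ∀ (i : V) (z : EuclideanSpace ℝ V),
      inner (𝕜 := ℝ) (u i) z = ∑ j, u i j * z j := by
    intro i z
    simp [PiLp.inner_apply, RCLike.inner_apply, conj_trivial]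
    exact Finset.sum_congr rfl fun j _ => mul_comm _ _
  -- key per-index claim
  have key : ∀ i, a i = 0 ∨ |μ i| ≤ lam := by
    intro i
    set c := ∑ j, u i j with hc
    by_cases hc0 : c = 0
    · right
      exact hlam.2 ⟨μ i, (fun j => u i j), fun h => u.orthonormal.ne_zero i (PiLp.ext fun j => congrFun h j), hc0, (heig i).trans (funext fun k => rfl), rfl⟩
    · have hμd : μ i = d := by
        have h1 : ∑ j, (A.mulVec (fun j => u i j)) j = d * c := hsum_mulVec _
        rw [heig i, ← Finset.mul_sum, ← hc] at h1
        exact mul_right_cancel₀ hc0 h1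
      by_cases hw : (fun j => u i j - c / Fintype.card V) = 0
      · left
        have huc : ∀ j, u i j = c / Fintype.card V := by
          intro j
          have h := congrFun hw j
          simp only [Pi.zero_apply] at h
          linarith
        rw [ha]
        simp only [hinner]
        rw [Finset.sum_congr rfl fun j _ => by rw [huc j]]
        rw [← Finset.mul_sum, hx', hx, mul_zero]
      · right
        refine hlam.2 ⟨μ i, _, hw, ?_, ?_, rfl⟩
        · simp only [Finset.sum_sub_distrib, ← hc, Finset.sum_const, Finset.card_univ,
            nsmul_eq_mul]
          field_simp
          ring
        · funext k
          have h1 : (A.mulVec (fun j => u i j - c / Fintype.card V)) k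
              = (A.mulVec (fun j => u i j)) k - c / Fintype.card V * d := by
            simp only [Matrix.mulVec, dotProduct, mul_sub, Finset.sum_sub_distrib]
            rw [← Finset.sum_mul, hreg k]
            ring
          rw [h1, heig i]
          simp only [Pi.smul_apply, smul_eq_mul]
          rw [hμd]
          ring
  -- Parseval
  have hpars : ∀ z : EuclideanSpace ℝ V,
      ∑ i, (inner (𝕜 := ℝ) (u i) z) ^ 2 = ∑ j, z j ^ 2 := by
    intro z
    have h := u.sum_inner_mul_inner z z
    simp only [hinner] at h ⊢
    simp only [PiLp.inner_apply] at h
    simp only [RCLike.inner_apply, conj_trivial] at h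
    calc ∑ i, (∑ j, u i j * z j) ^ 2
        = ∑ i, (∑ j, z j * u i j) * (∑ j, u i j * z j) := by
          refine Finset.sum_congr rfl fun i _ => ?_
          rw [Finset.sum_congr rfl fun j _ => mul_comm (z j) (u i j), sq]
      _ = ∑ j, z j * z j := by
          rw [← h]
          exact Finset.sum_congr rfl fun i _ => by
            rw [Finset.sum_congr rfl fun j _ => mul_comm (z j) (u i j)]
      _ = ∑ j, z j ^ 2 := by simp [sq]
  -- expansion of the bilinear form
  have hexp : ∑ i, x i * (A.mulVec y) i = ∑ i, μ i * (a i * b i) := by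
    have h1 : ∑ i, x i * (A.mulVec y) i = inner (𝕜 := ℝ) x' (WithLp.toLp 2 (A.mulVec y) : EuclideanSpace ℝ V) := by
      rw [PiLp.inner_apply]
      simp [RCLike.inner_apply, conj_trivial, hx']
      exact Finset.sum_congr rfl fun j _ => mul_comm _ _
    rw [h1, ← (u.sum_inner_mul_inner x' (WithLp.toLp 2 (A.mulVec y) : EuclideanSpace ℝ V))]
    refine Finset.sum_congr rfl fun i _ => ?_
    have h2 : inner (𝕜 := ℝ) (u i) (WithLp.toLp 2 (A.mulVec y) : EuclideanSpace ℝ V) = μ i * b i := by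
      rw [hinner]
      have h3 : ∑ j, u i j * (A.mulVec y) j = ∑ j, (A.mulVec (fun j => u i j)) j * y j := by
        simp only [Matrix.mulVec, dotProduct, Finset.mul_sum, Finset.sum_mul]
        rw [Finset.sum_comm]
        refine Finset.sum_congr rfl fun j _ => Finset.sum_congr rfl fun k _ => ?_
        rw [hsymm.apply j k]
        ring
      rw [h3, heig i]
      rw [hb]
      simp only [hinner, Finset.mul_sum]
      exact Finset.sum_congr rfl fun j _ => by rw [hy']; ring
    rw [h2]
    have h4 : inner (𝕜 := ℝ) x' (u i : EuclideanSpace ℝ V) = a i := real_inner_comm _ _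
    rw [h4]
    ring
  -- final bound
  rw [hexp]
  calc |∑ i, μ i * (a i * b i)|
      ≤ ∑ i, |μ i * (a i * b i)| := Finset.abs_sum_le_sum_abs _ _
    _ ≤ ∑ i, lam * (|a i| * |b i|) := by
        refine Finset.sum_le_sum fun i _ => ?_
        rcases key i with h | h
        · have h0 : |μ i * (a i * b i)| = 0 := by rw [h]; simp
          rw [h0]
          positivity
        · rw [abs_mul, abs_mul]
          exact mul_le_mul_of_nonneg_right h (by positivity)
    _ = lam * ∑ i, |a i| * |b i| := by rw [Finset.mul_sum]
    _ ≤ lam * (Real.sqrt (∑ i, x i ^ 2) * Real.sqrt (∑ i, y i ^ 2)) := by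
        refine mul_le_mul_of_nonneg_left ?_ hlamnn
        have hcs := Finset.sum_mul_sq_le_sq_mul_sq Finset.univ (fun i => |a i|) (fun i => |b i|)
        simp only [sq_abs] at hcs
        have hax : ∑ i, a i ^ 2 = ∑ j, x j ^ 2 := hpars x'
        have hay : ∑ i, b i ^ 2 = ∑ j, y j ^ 2 := hpars y'
        rw [hax, hay] at hcs
        have h5 : 0 ≤ ∑ i, |a i| * |b i| :=
          Finset.sum_nonneg fun i _ => mul_nonneg (abs_nonneg _) (abs_nonneg _)
        have h6 := Real.sqrt_le_sqrt hcs
        rwa [Real.sqrt_sq h5, Real.sqrt_mul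
          (Finset.sum_nonneg fun j _ => sq_nonneg (x j))] at h6

theorem stmt_16 (V : Type) [Fintype V] (d : ℕ) (A : Matrix V V ℝ)
    (hsymm : A.IsSymm)
    (h01 : ∀ x y : V, A x y = 0 ∨ A x y = 1)
    (hreg : ∀ x : V, ∑ y, A x y = d)
    (lam : ℝ)
    (hlam : IsGreatest {c : ℝ | ∃ (μ : ℝ) (v : V → ℝ), v ≠ 0 ∧ (∑ x, v x) = 0 ∧
        A.mulVec v = μ • v ∧ c = |μ|} lam)
    (S T : Finset V) :
    |(∑ s ∈ S, ∑ t ∈ T, A s t) - d * S.card * T.card / (Fintype.card V)| ≤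
      lam * Real.sqrt (S.card * T.card * (1 - S.card / Fintype.card V)
        * (1 - T.card / Fintype.card V)) := by
  classical
  have hne : Nonempty V := by
    obtain ⟨μ0, v0, hv0, -, -, -⟩ := hlam.1
    by_contra h
    rw [not_nonempty_iff] at h
    exact hv0 (funext fun i => (h.elim i))
  set n : ℝ := (Fintype.card V : ℝ) with hn
  have hn0 : 0 < n := by rw [hn]; exact_mod_cast Fintype.card_pos
  set α : ℝ := S.card / n with hα
  set β : ℝ := T.card / n with hβ
  set x : V → ℝ := fun i => (if i ∈ S then 1 else 0) - α with hxdef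
  set y : V → ℝ := fun i => (if i ∈ T then 1 else 0) - β with hydef
  have hind : ∀ (U : Finset V), ∑ i, (if i ∈ U then (1 : ℝ) else 0) = U.card := by
    intro U
    simp
  have hxs : ∑ i, x i = 0 := by
    simp only [hxdef, Finset.sum_sub_distrib, hind, Finset.sum_const, Finset.card_univ,
      nsmul_eq_mul, mul_one]
    rw [hα]
    field_simp
    rw [hn]; ring
  have hys : ∑ i, y i = 0 := by
    simp only [hydef, Finset.sum_sub_distrib, hind, Finset.sum_const, Finset.card_univ,
      nsmul_eq_mul, mul_one]
    rw [hβ]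
    field_simp
    rw [hn]; ring
  have hcol : ∀ j, ∑ i, A i j = d := fun j => by
    rw [Finset.sum_congr rfl fun i _ => hsymm.apply j i]; exact hreg j
  have hsq : ∀ (U : Finset V) (γ : ℝ) (h : γ * n = U.card),
      ∑ i, ((if i ∈ U then (1 : ℝ) else 0) - γ) ^ 2 = U.card * (1 - γ) := by
    intro U γ h
    have : ∀ i, ((if i ∈ U then (1 : ℝ) else 0) - γ) ^ 2
        = (if i ∈ U then (1 : ℝ) else 0) * (1 - 2 * γ) + γ ^ 2 := by
      intro i
      by_cases hi : i ∈ U <;> simp [hi] <;> ring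
    rw [Finset.sum_congr rfl fun i _ => this i]
    simp only [Finset.sum_add_distrib, ← Finset.sum_mul, hind, Finset.sum_const,
      Finset.card_univ, nsmul_eq_mul]
    have hγn : (Fintype.card V : ℝ) * γ ^ 2 = γ * U.card := by
      rw [← h, hn]; ring
    rw [hγn]
    ring
  have hαn : α * n = S.card := by rw [hα]; field_simp
  have hβn : β * n = T.card := by rw [hβ]; field_simp
  -- key identity
  have hmv : ∀ i, (A.mulVec y) i = (∑ t ∈ T, A i t) - β * d := by
    intro i
    simp only [Matrix.mulVec, dotProduct, hydef, mul_sub, Finset.sum_sub_distrib,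
      ← Finset.sum_mul, hreg i]
    rw [mul_comm (d : ℝ) β]
    congr 1
    simp [mul_ite, Finset.sum_ite_mem]
  have hkey : ∑ i, x i * (A.mulVec y) i
      = (∑ s ∈ S, ∑ t ∈ T, A s t) - d * S.card * T.card / n := by
    simp only [hmv, hxdef, sub_mul, ite_mul, one_mul, zero_mul, Finset.sum_sub_distrib,
      Finset.sum_ite_mem, Finset.univ_inter]
    have h1 : ∑ i ∈ S, ((∑ t ∈ T, A i t) - β * d) = (∑ s ∈ S, ∑ t ∈ T, A s t) - S.card * (β * d) := by
      rw [Finset.sum_sub_distrib, Finset.sum_const, nsmul_eq_mul]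
    have h2 : ∑ i, α * ((∑ t ∈ T, A i t) - β * d) = α * (T.card * d - n * (β * d)) := by
      rw [← Finset.mul_sum, Finset.sum_sub_distrib, Finset.sum_const, Finset.card_univ, nsmul_eq_mul]
      rw [show ∑ x, ∑ t ∈ T, A x t = ∑ t ∈ T, ∑ x, A x t from Finset.sum_comm]
      congr 2
      rw [Finset.sum_congr rfl fun t _ => hcol t, Finset.sum_const, nsmul_eq_mul]
    rw [h2, Finset.sum_const, nsmul_eq_mul]
    have hfin : (S.card : ℝ) * (β * d) + α * ((T.card : ℝ) * d - n * (β * d))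
        = d * S.card * T.card / n := by
      rw [hα, hβ]; field_simp; ring
    linarith [hfin]
  have hbound := mix_aux d A hsymm hreg lam hlam x y hxs hys
  rw [hkey, hsq S α hαn, hsq T β hβn] at hbound
  have hScard : (S.card : ℝ) ≤ n := by rw [hn]; exact_mod_cast Finset.card_le_univ S
  have hTcard : (T.card : ℝ) ≤ n := by rw [hn]; exact_mod_cast Finset.card_le_univ T
  have hα1 : 0 ≤ 1 - α := by
    rw [hα, sub_nonneg, div_le_one hn0]; exact hScard
  have hβ1 : 0 ≤ 1 - β := by
    rw [hβ, sub_nonneg, div_le_one hn0]; exact hTcard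
  have hsqrt : Real.sqrt ((S.card : ℝ) * (1 - α)) * Real.sqrt ((T.card : ℝ) * (1 - β))
      = Real.sqrt ((S.card : ℝ) * T.card * (1 - α) * (1 - β)) := by
    rw [← Real.sqrt_mul (by positivity)]
    congr 1
    ring
  rw [hsqrt] at hbound
  exact hbound
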